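/- arXiv:1311.4262 — 2 statements merged into one kernel-verified Lean document; each statement's English description precedes it below -/
import Mathlib

section
/- Let s be a nonzero complex number, y a complex number, x = s + s^{-1}, A = [[s,1],[0,s^{-1}]], B = [[s,0],[2-y,s^{-1}]], and for a positive integer m set W = (B·A^{-1})^m·(B^{-1}·A)^m, λ = tr(W), and α = 1 - (y+2-x^2)·S_{m-1}(y)·(S_{m-1}(y) - S_{m-2}(y)). Then for every integer n, W^n·A - B·W^n equals the 2×2 matrix [[0, φ],[(y-2)·φ, 0]], where φ = S_{n-1}(λ)·α - S_{n-2}(λ). -/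
open Real

/-- Auxiliary sequence for the Chebyshev-like polynomials on natural indices. -/
def Saux {R : Type*} [CommRing R] : ℕ → R → R
  | 0, _ => 1
  | 1, z => z
  | (n + 2), z => z * Saux (n + 1) z - Saux n z

/-- The Chebyshev-like polynomials `S j` indexed by all integers `j`:
`S 0 z = 1`, `S 1 z = z`, and `S (j + 1) z = z * S j z - S (j - 1) z` for all `j : ℤ`
(so `S (-1) z = 0`, `S (-2) z = -1`, and in general `S (-j) z = -S (j - 2) z`). -/
def S {R : Type*} [CommRing R] (j : ℤ) (z : R) : R :=
  if 0 ≤ j then Saux j.toNat z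
  else if j = -1 then 0
  else -Saux (-j - 2).toNat z

section Slemmas

variable {R : Type*} [CommRing R]

lemma S_natCast (k : ℕ) (z : R) : S (k : ℤ) z = Saux k z := by
  simp [S]

lemma S_neg_one' (z : R) : S (-1) z = 0 := by norm_num [S]

lemma S_rec (j : ℤ) (z : R) : S (j + 1) z = z * S j z - S (j - 1) z := by
  rcases le_or_gt 1 j with hj | hj
  · obtain ⟨k, rfl⟩ : ∃ k : ℕ, j = (k : ℤ) + 1 := ⟨(j - 1).toNat, by omega⟩
    have h1 : ((k : ℤ) + 1 + 1) = ((k + 2 : ℕ) : ℤ) := by push_cast; ring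
    have h2 : ((k : ℤ) + 1) = ((k + 1 : ℕ) : ℤ) := by push_cast; ring
    have h3 : ((k : ℤ) + 1 - 1) = ((k : ℕ) : ℤ) := by push_cast; ring
    rw [h1, h3, h2, S_natCast, S_natCast, S_natCast]
    rfl
  rcases eq_or_lt_of_le (by omega : j ≤ 0) with hj0 | hj
  · subst hj0; norm_num [S]; show Saux 1 z = z * Saux 0 z; simp [Saux]
  rcases eq_or_lt_of_le (by omega : j ≤ -1) with hj1 | hj
  · rw [hj1]; norm_num [S]
  rcases eq_or_lt_of_le (by omega : j ≤ -2) with hj2 | hj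
  · rw [hj2]
    have : ((-2 : ℤ) + 1) = -1 := by norm_num
    rw [this, S_neg_one']
    norm_num [S]
    simp [Saux]
  · -- j ≤ -3
    have h1 : ¬ (0 : ℤ) ≤ j + 1 := by omega
    have h2 : ¬ (0 : ℤ) ≤ j := by omega
    have h3 : ¬ (0 : ℤ) ≤ j - 1 := by omega
    have h4 : j + 1 ≠ -1 := by omega
    have h5 : j ≠ -1 := by omega
    have h6 : j - 1 ≠ -1 := by omega
    rw [S, S, S, if_neg h1, if_neg h2, if_neg h3, if_neg h4, if_neg h5, if_neg h6]
    have e1 : (-(j + 1) - 2).toNat = (-j - 3).toNat := by omega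
    have e2 : (-j - 2).toNat = (-j - 3).toNat + 1 := by omega
    have e3 : (-(j - 1) - 2).toNat = (-j - 3).toNat + 2 := by omega
    rw [e1, e2, e3]
    show -Saux (-j - 3).toNat z = z * -Saux ((-j - 3).toNat + 1) z -
      -(z * Saux ((-j-3).toNat + 1) z - Saux (-j - 3).toNat z)
    ring

lemma S_zero (z : R) : S 0 z = 1 := by simp [S, Saux]

lemma S_neg_one (z : R) : S (-1) z = 0 := by norm_num [S]

lemma S_neg_two (z : R) : S (-2) z = -1 := by
  have : S (-2 : ℤ) z = -Saux ((-(-2:ℤ) - 2).toNat) z := by norm_num [S]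
  rw [this]
  norm_num
  show Saux 0 z = 1
  simp [Saux]

end Slemmas

section MatLemmas

open Matrix

lemma cayley (M : Matrix (Fin 2) (Fin 2) ℂ) :
    M * M = M.trace • M - M.det • 1 := by
  ext i j
  fin_cases i <;> fin_cases j <;>
    simp [Matrix.mul_apply, Fin.sum_univ_two, Matrix.trace_fin_two, Matrix.det_fin_two,
      Matrix.one_apply] <;> ring

lemma inv_of_det_one {M : Matrix (Fin 2) (Fin 2) ℂ} (h : M.det = 1) :
    M⁻¹ = M.trace • 1 - M := by
  apply Matrix.inv_eq_right_inv
  rw [mul_sub, mul_smul_comm, mul_one, cayley, h]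
  simp

lemma zpow_formula {M : Matrix (Fin 2) (Fin 2) ℂ} (h : M.det = 1) (n : ℤ) :
    M ^ n = S (n - 1) M.trace • M - S (n - 2) M.trace • 1 := by
  have hu : IsUnit M.det := by rw [h]; exact isUnit_one
  induction n using Int.induction_on with
  | zero =>
    norm_num [S_neg_one, S_neg_two]
  | succ k ih =>
    have e1 : ((k : ℤ) + 1 - 1) = k := by ring
    have e2 : ((k : ℤ) + 1 - 2) = k - 1 := by ring
    rw [Matrix.zpow_add_one hu, ih, e1, e2, sub_mul, smul_mul_assoc, smul_mul_assoc,
      one_mul, cayley, h]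
    have hr : S (k : ℤ) M.trace = M.trace * S ((k : ℤ) - 1) M.trace - S ((k : ℤ) - 1 - 1) M.trace := by
      have := S_rec ((k : ℤ) - 1) M.trace
      rw [show ((k:ℤ) - 1 + 1) = (k:ℤ) by ring] at this
      exact this
    rw [hr]
    have e3 : ((k : ℤ) - 1 - 1) = (k : ℤ) - 2 := by ring
    rw [e3]
    module
  | pred k ih =>
    have hMM := cayley M
    rw [h, one_smul] at hMM
    rw [show M ^ (-(k:ℤ) - 1) = M ^ (-(k:ℤ)) * M⁻¹ from Matrix.zpow_sub_one hu _,
      ih, inv_of_det_one h]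
    have hr3 : S (-(k:ℤ) - 3) M.trace
        = M.trace * S (-(k:ℤ) - 2) M.trace - S (-(k:ℤ) - 1) M.trace := by
      have H := S_rec (-(k:ℤ) - 2) M.trace
      rw [show (-(k:ℤ) - 2 + 1) = -(k:ℤ) - 1 by ring,
        show (-(k:ℤ) - 2 - 1) = -(k:ℤ) - 3 by ring] at H
      linear_combination H
    rw [show (-(k:ℤ) - 1 - 1) = -(k:ℤ) - 2 by ring,
      show (-(k:ℤ) - 1 - 2) = -(k:ℤ) - 3 by ring, hr3]
    simp only [sub_mul, mul_sub, smul_mul_assoc, mul_smul_comm, mul_one, one_mul, hMM]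
    module

end MatLemmas

set_option maxHeartbeats 2000000 in
theorem stmt3 (s y x : ℂ) (hs : s ≠ 0) (hx : x = s + s⁻¹) (m : ℕ) (hm : 0 < m)
    (A B W : Matrix (Fin 2) (Fin 2) ℂ)
    (hA : A = !![s, 1; 0, s⁻¹]) (hB : B = !![s, 0; 2 - y, s⁻¹])
    (hW : W = (B * A⁻¹) ^ m * (B⁻¹ * A) ^ m)
    (lam alp : ℂ) (hlam : lam = Matrix.trace W)
    (halp : alp = 1 - (y + 2 - x ^ 2) * S ((m : ℤ) - 1) y * (S ((m : ℤ) - 1) y - S ((m : ℤ) - 2) y))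
    (n : ℤ) :
    W ^ n * A - B * W ^ n =
      !![0, S (n - 1) lam * alp - S (n - 2) lam;
         (y - 2) * (S (n - 1) lam * alp - S (n - 2) lam), 0] := by
  have hst : s * s⁻¹ = 1 := mul_inv_cancel₀ hs
  -- inverses
  have hAinv : A⁻¹ = !![s⁻¹, -1; 0, s] := by
    apply Matrix.inv_eq_right_inv
    rw [hA]
    ext i j
    fin_cases i <;> fin_cases j <;>
      simp [Matrix.mul_apply, Fin.sum_univ_two, Matrix.one_apply] <;>
      first | ring1 | linear_combination hst | linear_combination -hst
  have hBinv : B⁻¹ = !![s⁻¹, 0; y - 2, s] := by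
    apply Matrix.inv_eq_right_inv
    rw [hB]
    ext i j
    fin_cases i <;> fin_cases j <;>
      simp [Matrix.mul_apply, Fin.sum_univ_two, Matrix.one_apply] <;>
      first | ring1 | linear_combination hst | linear_combination -hst
  have hM : B * A⁻¹ = !![1, -s; (2 - y) * s⁻¹, y - 1] := by
    rw [hB, hAinv]
    ext i j
    fin_cases i <;> fin_cases j <;>
      simp [Matrix.mul_apply, Fin.sum_univ_two] <;>
      first | ring1 | linear_combination hst | linear_combination -hst
  have hN : B⁻¹ * A = !![1, s⁻¹; (y - 2) * s, y - 1] := by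
    rw [hBinv, hA]
    ext i j
    fin_cases i <;> fin_cases j <;>
      simp [Matrix.mul_apply, Fin.sum_univ_two] <;>
      first | ring1 | linear_combination hst | linear_combination -hst
  have hdM : (B * A⁻¹).det = 1 := by
    rw [hM, Matrix.det_fin_two_of]; field_simp; ring
  have hdN : (B⁻¹ * A).det = 1 := by
    rw [hN, Matrix.det_fin_two_of]; field_simp; ring
  have htrM : (B * A⁻¹).trace = y := by
    rw [hM, Matrix.trace_fin_two_of]; ring
  have htrN : (B⁻¹ * A).trace = y := by
    rw [hN, Matrix.trace_fin_two_of]; ring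
  set p : ℂ := S ((m : ℤ) - 1) y with hp
  set q : ℂ := S ((m : ℤ) - 2) y with hq
  -- powers via zpow formula
  have hMm : (B * A⁻¹) ^ m = p • (B * A⁻¹) - q • 1 := by
    have := zpow_formula hdM (m : ℤ)
    rwa [htrM, zpow_natCast] at this
  have hNm : (B⁻¹ * A) ^ m = p • (B⁻¹ * A) - q • 1 := by
    have := zpow_formula hdN (m : ℤ)
    rwa [htrN, zpow_natCast] at this
  -- determinant relation for p, q
  have hrel : p ^ 2 - y * p * q + q ^ 2 = 1 := by
    have h1 : ((B * A⁻¹) ^ m).det = 1 := by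
      rw [Matrix.det_pow, hdM, one_pow]
    rw [hMm, hM] at h1
    have h2 : (p • !![(1:ℂ), -s; (2 - y) * s⁻¹, y - 1] - q • 1) =
        !![p - q, -(p * s); p * ((2 - y) * s⁻¹), p * (y - 1) - q] := by
      ext i j
      fin_cases i <;> fin_cases j <;> simp [Matrix.one_apply] <;> ring
    rw [h2, Matrix.det_fin_two_of] at h1
    first | linear_combination h1 + (p ^ 2 * (2 - y)) * hst | linear_combination h1 + (p^2*y - 2*p^2) * hst
  -- explicit W
  have hWe : W = !![p - q, -(p * s); p * ((2 - y) * s⁻¹), p * (y - 1) - q] *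
      !![p - q, p * s⁻¹; p * ((y - 2) * s), p * (y - 1) - q] := by
    rw [hW, hMm, hNm, hM, hN]
    congr 1 <;> · ext i j; fin_cases i <;> fin_cases j <;> simp [Matrix.one_apply] <;> ring
  -- key identity: W * A - B * W = alp • E
  have hkey : W * A - B * W = alp • !![(0 : ℂ), 1; y - 2, 0] := by
    rw [hWe, hA, hB, halp, hx]
    ext i j
    fin_cases i <;> fin_cases j <;>
      simp [Matrix.mul_apply, Fin.sum_univ_two]
    · ring
    · linear_combination ((4:ℂ) * p * q - 2 * p ^ 2 - y * p ^ 2) * hst + hrel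
    · linear_combination ((-8:ℂ) * p * q + 4 * p ^ 2 + 4 * y * p * q - y ^ 2 * p ^ 2) * hst
        + (y - 2) * hrel
    · ring
  -- det and trace of W
  have hdW : W.det = 1 := by
    rw [hW, Matrix.det_mul, Matrix.det_pow, Matrix.det_pow, hdM, hdN]
    norm_num
  have hWn : W ^ n = S (n - 1) lam • W - S (n - 2) lam • 1 := by
    have := zpow_formula hdW n
    rwa [← hlam] at this
  have hBA : B - A = (-1 : ℂ) • !![(0 : ℂ), 1; y - 2, 0] := by
    rw [hA, hB]
    ext i j
    fin_cases i <;> fin_cases j <;>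
      simp [Matrix.sub_apply, Matrix.smul_apply] <;> ring
  rw [hWn, sub_mul, mul_sub, smul_mul_assoc, smul_mul_assoc, one_mul, mul_smul_comm,
    mul_smul_comm, mul_one]
  have : S (n - 1) lam • (W * A) - S (n - 2) lam • A -
      (S (n - 1) lam • (B * W) - S (n - 2) lam • B)
      = S (n - 1) lam • (W * A - B * W) + S (n - 2) lam • (B - A) := by
    module
  rw [this, hkey, hBA]
  clear * -
  ext i j
  fin_cases i <;> fin_cases j <;> simp <;> ring
end

section
/- Let m and n be positive integers and let x be a real number with 2·√(1 - 1/(4mn)) < |x| ≤ 2 (for example x = 2·cos(π/r) for a real number r > π / arccos(√(1 - 1/(4mn)))). Then there exists a real number y with y > 2 such that φ(x,y) = 0, where φ(x,y) = S_{n-1}(λ)·α - S_{n-2}(λ) with λ = 2 + (y-2)(y+2-x^2)·S_{m-1}(y)^2 and α = 1 - (y+2-x^2)·S_{m-1}(y)·(S_{m-1}(y) - S_{m-2}(y)). -/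
open Real

lemma Saux_add_two {R : Type*} [CommRing R] (k : ℕ) (z : R) :
    Saux (k + 2) z = z * Saux (k + 1) z - Saux k z := rfl

lemma continuous_Saux : ∀ k : ℕ, Continuous (fun z : ℝ => Saux k z)
  | 0 => continuous_const
  | 1 => continuous_id
  | (k + 2) => by
      have h1 := continuous_Saux (k + 1)
      have h0 := continuous_Saux k
      show Continuous fun z : ℝ => z * Saux (k + 1) z - Saux k z
      exact (continuous_id.mul h1).sub h0

lemma continuous_S (j : ℤ) : Continuous (fun z : ℝ => S j z) := by
  unfold S
  split
  · exact continuous_Saux _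
  · split
    · exact continuous_const
    · exact (continuous_Saux _).neg

lemma Saux_two : ∀ k : ℕ, Saux k (2 : ℝ) = k + 1
  | 0 => by norm_num [Saux]
  | 1 => by norm_num [Saux]
  | (k + 2) => by
      rw [Saux_add_two, Saux_two (k + 1), Saux_two k]
      push_cast; ring

lemma Saux_pos : ∀ k : ℕ, ∀ y : ℝ, 2 ≤ y → 1 ≤ Saux k y ∧ Saux k y ≤ Saux (k + 1) y
  | 0 => by
      intro y hy
      refine ⟨le_refl _, ?_⟩
      show (1 : ℝ) ≤ y; linarith
  | (k + 1) => by
      intro y hy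
      obtain ⟨h1, h2⟩ := Saux_pos k y hy
      refine ⟨le_trans h1 h2, ?_⟩
      rw [Saux_add_two]
      nlinarith

lemma Saux_ge_one (k : ℕ) (y : ℝ) (hy : 2 ≤ y) : 1 ≤ Saux k y := (Saux_pos k y hy).1

lemma Saux_gap : ∀ k : ℕ, ∀ y : ℝ, 3 ≤ y → Saux k y + 1 ≤ Saux (k + 1) y
  | 0 => by
      intro y hy
      show (1 : ℝ) + 1 ≤ y; linarith
  | (k + 1) => by
      intro y hy
      have hy2 : (2 : ℝ) ≤ y := by linarith
      obtain ⟨h1, h2⟩ := Saux_pos k y hy2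
      have h1' : (1 : ℝ) ≤ Saux (k + 1) y := le_trans h1 h2
      rw [Saux_add_two]
      nlinarith

lemma S_two (j : ℤ) (hj : -1 ≤ j) : S j (2 : ℝ) = j + 1 := by
  rcases le_or_gt 0 j with h | h
  · rw [S, if_pos h, Saux_two, ← Int.cast_natCast, Int.toNat_of_nonneg h]
  · have : j = -1 := by omega
    subst this
    norm_num [S]

lemma S_one_le (j : ℤ) (hj : 0 ≤ j) (y : ℝ) (hy : 2 ≤ y) : 1 ≤ S j y := by
  rw [S, if_pos hj]
  exact Saux_ge_one _ y hy

lemma S_nonneg (j : ℤ) (hj : -1 ≤ j) (y : ℝ) (hy : 2 ≤ y) : 0 ≤ S j y := by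
  rcases le_or_gt 0 j with h | h
  · linarith [S_one_le j h y hy]
  · have : j = -1 := by omega
    subst this
    norm_num [S]

lemma S_gap (j : ℤ) (hj : 0 ≤ j) (y : ℝ) (hy : 3 ≤ y) :
    S (j - 1) y + 1 ≤ S j y := by
  rcases eq_or_lt_of_le hj with h | h
  · subst h
    show S (-1) y + 1 ≤ S 0 y
    norm_num [S, Saux]
  · have h1 : (0 : ℤ) ≤ j - 1 := by omega
    have e1 : S (j - 1) y = Saux (j - 1).toNat y := by rw [S, if_pos h1]
    have e2 : S j y = Saux ((j - 1).toNat + 1) y := by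
      rw [S, if_pos hj]
      congr 1
      omega
    rw [e1, e2]
    exact Saux_gap _ y hy

/-- The Riley function of the double twist knot, as a function of `y`. -/
noncomputable def F (m n : ℕ) (x : ℝ) (y : ℝ) : ℝ :=
  S ((n : ℤ) - 1) (2 + (y - 2) * (y + 2 - x ^ 2) * S ((m : ℤ) - 1) y ^ 2) *
  (1 - (y + 2 - x ^ 2) * S ((m : ℤ) - 1) y * (S ((m : ℤ) - 1) y - S ((m : ℤ) - 2) y)) -
  S ((n : ℤ) - 2) (2 + (y - 2) * (y + 2 - x ^ 2) * S ((m : ℤ) - 1) y ^ 2)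

lemma continuous_F (m n : ℕ) (x : ℝ) : Continuous (F m n x) := by
  have hL : Continuous fun y : ℝ => 2 + (y - 2) * (y + 2 - x ^ 2) * S ((m : ℤ) - 1) y ^ 2 :=
    continuous_const.add
      (((continuous_id.sub continuous_const).mul
        ((continuous_id.add continuous_const).sub continuous_const)).mul
        ((continuous_S _).pow 2))
  have hA : Continuous fun y : ℝ =>
      1 - (y + 2 - x ^ 2) * S ((m : ℤ) - 1) y * (S ((m : ℤ) - 1) y - S ((m : ℤ) - 2) y) :=
    continuous_const.sub
      ((((continuous_id.add continuous_const).sub continuous_const).mul (continuous_S _)).mul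
        ((continuous_S _).sub (continuous_S _)))
  exact (((continuous_S _).comp hL).mul hA).sub ((continuous_S _).comp hL)

theorem stmt17 (m n : ℕ) (hm : 0 < m) (hn : 0 < n) (x : ℝ)
    (hx1 : 2 * Real.sqrt (1 - 1 / (4 * (m : ℝ) * (n : ℝ))) < |x|) (hx2 : |x| ≤ 2) :
    ∃ y : ℝ, 2 < y ∧
      S ((n : ℤ) - 1) (2 + (y - 2) * (y + 2 - x ^ 2) * S ((m : ℤ) - 1) y ^ 2) *
      (1 - (y + 2 - x ^ 2) * S ((m : ℤ) - 1) y * (S ((m : ℤ) - 1) y - S ((m : ℤ) - 2) y)) -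
      S ((n : ℤ) - 2) (2 + (y - 2) * (y + 2 - x ^ 2) * S ((m : ℤ) - 1) y ^ 2) = 0 := by
  have hmR : (1 : ℝ) ≤ m := by exact_mod_cast hm
  have hnR : (1 : ℝ) ≤ n := by exact_mod_cast hn
  have hx2' : x ^ 2 ≤ 4 := by nlinarith [abs_nonneg x, sq_abs x]
  have hmn1 : -1 ≤ (m : ℤ) - 2 := by omega
  have hmn0 : 0 ≤ (m : ℤ) - 1 := by omega
  have hnn1 : -1 ≤ (n : ℤ) - 2 := by omega
  have hnn0 : 0 ≤ (n : ℤ) - 1 := by omega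
  -- x^2 > 4 - 1/(mn)
  have hx2sq : 4 * (1 - 1 / (4 * (m : ℝ) * (n : ℝ))) < x ^ 2 := by
    have ht : (0 : ℝ) ≤ 1 - 1 / (4 * (m : ℝ) * (n : ℝ)) := by
      have h1 : (1 : ℝ) ≤ 4 * (m : ℝ) * (n : ℝ) := by nlinarith
      have : 1 / (4 * (m : ℝ) * (n : ℝ)) ≤ 1 := by
        rw [div_le_one (by linarith)]; exact h1
      linarith
    have h0 : (0 : ℝ) ≤ 2 * Real.sqrt (1 - 1 / (4 * (m : ℝ) * (n : ℝ))) := by positivity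
    have hsq := mul_self_lt_mul_self h0 hx1
    have heq : (2 * Real.sqrt (1 - 1 / (4 * (m : ℝ) * (n : ℝ)))) *
        (2 * Real.sqrt (1 - 1 / (4 * (m : ℝ) * (n : ℝ)))) =
        4 * (1 - 1 / (4 * (m : ℝ) * (n : ℝ))) := by
      have := Real.mul_self_sqrt ht
      nlinarith [this]
    rw [heq] at hsq
    calc 4 * (1 - 1 / (4 * (m : ℝ) * (n : ℝ))) < |x| * |x| := hsq
      _ = x ^ 2 := by rw [← sq_abs x]; ring
  have hkey : (m : ℝ) * n * (4 - x ^ 2) < 1 := by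
    have hmn : (0 : ℝ) < (m : ℝ) * n := by positivity
    have h4 : 4 - 1 / ((m : ℝ) * n) < x ^ 2 := by
      have heq : 4 * (1 - 1 / (4 * (m : ℝ) * (n : ℝ))) = 4 - 1 / ((m : ℝ) * n) := by
        field_simp
      linarith [heq ▸ hx2sq]
    have := mul_lt_mul_of_pos_left h4 hmn
    rw [mul_sub] at this
    have hinv : (m : ℝ) * n * (1 / ((m : ℝ) * n)) = 1 := by
      field_simp
    nlinarith
  -- F is positive at y = 2
  have hf2 : 0 < F m n x 2 := by
    unfold F
    have hL2 : (2 : ℝ) + (2 - 2) * (2 + 2 - x ^ 2) * S ((m : ℤ) - 1) 2 ^ 2 = 2 := by ring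
    rw [hL2, S_two _ (by omega : -1 ≤ (n : ℤ) - 1), S_two _ hnn1,
        S_two _ (by omega : -1 ≤ (m : ℤ) - 1), S_two _ hmn1]
    push_cast
    nlinarith [hkey]
  -- F is negative at y = 5
  have hf5 : F m n x 5 < 0 := by
    have ha1 : 1 ≤ S ((m : ℤ) - 1) (5 : ℝ) := S_one_le _ hmn0 5 (by norm_num)
    have hb0 : 0 ≤ S ((m : ℤ) - 2) (5 : ℝ) := S_nonneg _ hmn1 5 (by norm_num)
    have hgap : S ((m : ℤ) - 2) (5 : ℝ) + 1 ≤ S ((m : ℤ) - 1) (5 : ℝ) := by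
      have h := S_gap ((m : ℤ) - 1) hmn0 5 (by norm_num)
      rwa [show (m : ℤ) - 1 - 1 = (m : ℤ) - 2 from by ring] at h
    unfold F
    generalize hA : S ((m : ℤ) - 1) (5 : ℝ) = a at ha1 hb0 hgap ⊢
    generalize hB : S ((m : ℤ) - 2) (5 : ℝ) = b at hb0 hgap ⊢
    have hL2 : (2 : ℝ) ≤ 2 + (5 - 2) * (5 + 2 - x ^ 2) * a ^ 2 := by
      nlinarith [sq_nonneg a]
    have hp : 1 ≤ S ((n : ℤ) - 1) (2 + (5 - 2) * (5 + 2 - x ^ 2) * a ^ 2) :=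
      S_one_le _ hnn0 _ hL2
    have hq : 0 ≤ S ((n : ℤ) - 2) (2 + (5 - 2) * (5 + 2 - x ^ 2) * a ^ 2) :=
      S_nonneg _ hnn1 _ hL2
    generalize hP : S ((n : ℤ) - 1) (2 + (5 - 2) * (5 + 2 - x ^ 2) * a ^ 2) = p at hp ⊢
    generalize hQ : S ((n : ℤ) - 2) (2 + (5 - 2) * (5 + 2 - x ^ 2) * a ^ 2) = q at hq ⊢
    clear hA hB hP hQ hf2 hx1
    have hAle : 1 - (5 + 2 - x ^ 2) * a * (a - b) ≤ -2 := by nlinarith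
    have h1 : p * (1 - (5 + 2 - x ^ 2) * a * (a - b)) ≤ p * (-2) :=
      mul_le_mul_of_nonneg_left hAle (by linarith)
    linarith [h1]
  -- intermediate value theorem
  have hsub := intermediate_value_Ioo' (by norm_num : (2 : ℝ) ≤ 5)
    (continuous_F m n x).continuousOn
  have h0mem : (0 : ℝ) ∈ Set.Ioo (F m n x 5) (F m n x 2) := ⟨hf5, hf2⟩
  obtain ⟨y, hy, hfy⟩ := hsub h0mem
  refine ⟨y, hy.1, ?_⟩
  unfold F at hfy
  exact hfy
end
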